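/- For each t ∈ k, the A-module M_t with k-basis v₁, v₂, v₃, v₄ and action x·v₁ = v₃, x·v₂ = 0, x·v₃ = v₄, x·v₄ = 0, y·v₁ = t v₃, y·v₂ = v₄, y·v₃ = t v₄, y·v₄ = 0 is a well-defined indecomposable A-module of length 4 with dim_k M_t/(m·M_t) = 2 and m·M_t ≅ A/(x², y − t x). -/

import Mathlib

open MvPolynomial

/-- `m = (x,y) ⊂ A = k[x,y]`. -/
noncomputable def mIdeal (k : Type) [Field k] : Ideal (MvPolynomial (Fin 2) k) :=
  Ideal.span {X 0, X 1}

/-- The multiplication table of the module `M_t`: `x·v₁ = v₃`, `x·v₂ = 0`, `x·v₃ = v₄`,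
`x·v₄ = 0`, `y·v₁ = t v₃`, `y·v₂ = v₄`, `y·v₃ = t v₄`, `y·v₄ = 0` (indices `0,…,3`). -/
def IsMt (k : Type) [Field k] (t : k) (M : Type) [AddCommGroup M]
    [Module (MvPolynomial (Fin 2) k) M] [Module k M]
    [IsScalarTower k (MvPolynomial (Fin 2) k) M] (v : Module.Basis (Fin 4) k M) : Prop :=
  (X 0 : MvPolynomial (Fin 2) k) • v 0 = v 2 ∧
  (X 0 : MvPolynomial (Fin 2) k) • v 1 = 0 ∧
  (X 0 : MvPolynomial (Fin 2) k) • v 2 = v 3 ∧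
  (X 0 : MvPolynomial (Fin 2) k) • v 3 = 0 ∧
  (X 1 : MvPolynomial (Fin 2) k) • v 0 = t • v 2 ∧
  (X 1 : MvPolynomial (Fin 2) k) • v 1 = v 3 ∧
  (X 1 : MvPolynomial (Fin 2) k) • v 2 = t • v 3 ∧
  (X 1 : MvPolynomial (Fin 2) k) • v 3 = 0

section Aux

variable {k : Type} [Field k] {t : k} {M : Type} [AddCommGroup M]
  [Module (MvPolynomial (Fin 2) k) M] [Module k M]
  [IsScalarTower k (MvPolynomial (Fin 2) k) M]

lemma smulC (c : k) (m : M) : c • m = (C c : MvPolynomial (Fin 2) k) • m := by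
  calc c • m = c • ((1 : MvPolynomial (Fin 2) k) • m) := by rw [one_smul]
    _ = (c • (1 : MvPolynomial (Fin 2) k)) • m := (smul_assoc c _ m).symm
    _ = (C c : MvPolynomial (Fin 2) k) • m := by
        rw [MvPolynomial.smul_eq_C_mul, mul_one]

lemma smul_commk (p : MvPolynomial (Fin 2) k) (c : k) (m : M) :
    p • (c • m) = c • (p • m) := by
  rw [smulC, smulC, ← mul_smul, ← mul_smul, mul_comm]

def IsMt' (k : Type) [Field k] (t : k) (M : Type) [AddCommGroup M]
    [Module (MvPolynomial (Fin 2) k) M] [Module k M]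
    [IsScalarTower k (MvPolynomial (Fin 2) k) M] (v : Module.Basis (Fin 4) k M) : Prop :=
  (X 0 : MvPolynomial (Fin 2) k) • v 0 = v 2 ∧
  (X 0 : MvPolynomial (Fin 2) k) • v 1 = 0 ∧
  (X 0 : MvPolynomial (Fin 2) k) • v 2 = v 3 ∧
  (X 0 : MvPolynomial (Fin 2) k) • v 3 = 0 ∧
  (X 1 : MvPolynomial (Fin 2) k) • v 0 = t • v 2 ∧
  (X 1 : MvPolynomial (Fin 2) k) • v 1 = v 3 ∧
  (X 1 : MvPolynomial (Fin 2) k) • v 2 = t • v 3 ∧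
  (X 1 : MvPolynomial (Fin 2) k) • v 3 = 0

lemma dec4 (v : Module.Basis (Fin 4) k M) (z : M) :
    z = v.repr z 0 • v 0 + v.repr z 1 • v 1 + v.repr z 2 • v 2 + v.repr z 3 • v 3 := by
  have := v.sum_repr z
  rw [Fin.sum_univ_four] at this
  linear_combination (norm := module) -this

lemma v3_mem (v : Module.Basis (Fin 4) k M) (hm : IsMt' k t M v)
    (N : Submodule (MvPolynomial (Fin 2) k) M) (z : M) (hz : z ∈ N) (hz0 : z ≠ 0) :
    v 3 ∈ N := by
  obtain ⟨h1, h2, h3, h4, h5, h6, h7, h8⟩ := hm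
  set r := v.repr z with hr
  have hdec : z = r 0 • v 0 + r 1 • v 1 + r 2 • v 2 + r 3 • v 3 := dec4 v z
  have memk : ∀ (c : k) (m : M), c ≠ 0 → c • m ∈ N → m ∈ N := by
    intro c m hc hmem
    have : (c⁻¹ : k) • (c • m) ∈ N := by
      rw [smulC]; exact N.smul_mem _ hmem
    rwa [← mul_smul, inv_mul_cancel₀ hc, one_smul] at this
  have hX0 : (X 0 : MvPolynomial (Fin 2) k) • z = r 0 • v 2 + r 2 • v 3 := by
    rw [hdec]
    simp only [smul_add, smul_commk, h1, h2, h3, h4, smul_zero]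
    abel
  by_cases hc0 : r 0 ≠ 0
  · have : (X 0 : MvPolynomial (Fin 2) k) • ((X 0 : MvPolynomial (Fin 2) k) • z)
        = r 0 • v 3 := by
      rw [hX0]
      simp only [smul_add, smul_commk, h3, h4, smul_zero, add_zero]
    exact memk _ _ hc0 (this ▸ N.smul_mem _ (N.smul_mem _ hz))
  push_neg at hc0
  by_cases hc2 : r 2 ≠ 0
  · have : (X 0 : MvPolynomial (Fin 2) k) • z = r 2 • v 3 := by
      rw [hX0, hc0, zero_smul, zero_add]
    exact memk _ _ hc2 (this ▸ N.smul_mem _ hz)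
  push_neg at hc2
  by_cases hc1 : r 1 ≠ 0
  · have : (X 1 : MvPolynomial (Fin 2) k) • z = r 1 • v 3 := by
      rw [hdec, hc0, hc2]
      simp only [smul_add, smul_commk, h5, h6, h7, h8, smul_zero, zero_smul,
        add_zero, zero_add]
    exact memk _ _ hc1 (this ▸ N.smul_mem _ hz)
  push_neg at hc1
  have hc3 : r 3 ≠ 0 := by
    intro hc3
    apply hz0
    rw [hdec, hc0, hc1, hc2, hc3]
    simp
  have : z = r 3 • v 3 := by rw [hdec, hc0, hc1, hc2]; simp
  exact memk _ _ hc3 (this ▸ hz)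

noncomputable def mIdeal' (k : Type) [Field k] : Ideal (MvPolynomial (Fin 2) k) :=
  Ideal.span {X 0, X 1}

lemma pv3 (v : Module.Basis (Fin 4) k M) (hm : IsMt' k t M v) (p : MvPolynomial (Fin 2) k) :
    p • v 3 ∈ Submodule.span k {v 3} := by
  obtain ⟨h1, h2, h3, h4, h5, h6, h7, h8⟩ := hm
  induction p using MvPolynomial.induction_on with
  | C a => rw [← smulC]; exact Submodule.smul_mem _ _ (Submodule.mem_span_singleton_self _)
  | add p q hp hq => rw [add_smul]; exact Submodule.add_mem _ hp hq
  | mul_X p i hp =>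
      have hi : (X i : MvPolynomial (Fin 2) k) • v 3 = 0 := by
        fin_cases i
        · exact h4
        · exact h8
      rw [mul_smul, hi, smul_zero]
      exact Submodule.zero_mem _

lemma pv2 (v : Module.Basis (Fin 4) k M) (hm : IsMt' k t M v) (p : MvPolynomial (Fin 2) k) :
    p • v 2 ∈ Submodule.span k {v 2, v 3} := by
  obtain ⟨h1, h2, h3, h4, h5, h6, h7, h8⟩ := hm
  have hsub : Submodule.span k {v 3} ≤ Submodule.span k {v 2, v 3} :=
    Submodule.span_mono (by simp)
  induction p using MvPolynomial.induction_on with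
  | C a =>
      rw [← smulC]
      exact Submodule.smul_mem _ _ (Submodule.subset_span (by simp))
  | add p q hp hq => rw [add_smul]; exact Submodule.add_mem _ hp hq
  | mul_X p i hp =>
      have hi : (X i : MvPolynomial (Fin 2) k) • v 2 = v 3 ∨
          (X i : MvPolynomial (Fin 2) k) • v 2 = t • v 3 := by
        fin_cases i
        · exact Or.inl h3
        · exact Or.inr h7
      rcases hi with hi | hi
      · rw [mul_smul, hi]; exact hsub (pv3 v ⟨h1,h2,h3,h4,h5,h6,h7,h8⟩ p)
      · rw [mul_smul, hi, smul_commk]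
        exact hsub (Submodule.smul_mem _ _ (pv3 v ⟨h1,h2,h3,h4,h5,h6,h7,h8⟩ p))

lemma mM_eq (v : Module.Basis (Fin 4) k M) (hm : IsMt' k t M v) :
    (mIdeal' k) • (⊤ : Submodule (MvPolynomial (Fin 2) k) M)
      = Submodule.span (MvPolynomial (Fin 2) k) {v 2} := by
  obtain ⟨h1, h2, h3, h4, h5, h6, h7, h8⟩ := hm
  apply le_antisymm
  · apply Submodule.smul_le.mpr
    intro a ha m _
    induction ha using Submodule.span_induction with
    | mem x hx =>
        have hX0 : ∀ m : M, (X 0 : MvPolynomial (Fin 2) k) • m ∈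
            Submodule.span (MvPolynomial (Fin 2) k) {v 2} := by
          intro m
          rw [dec4 v m]
          simp only [smul_add, smul_commk, h1, h2, h3, h4, smul_zero, add_zero]
          have e2 : v 2 ∈ Submodule.span (MvPolynomial (Fin 2) k) {v 2} :=
            Submodule.mem_span_singleton_self _
          have e3 : v 3 ∈ Submodule.span (MvPolynomial (Fin 2) k) {v 2} := by
            rw [← h3]; exact Submodule.smul_mem _ _ e2
          have hks : ∀ (c : k) (w : M),
              w ∈ Submodule.span (MvPolynomial (Fin 2) k) {v 2} →
              c • w ∈ Submodule.span (MvPolynomial (Fin 2) k) {v 2} := by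
            intro c w hw; rw [smulC]; exact Submodule.smul_mem _ _ hw
          exact Submodule.add_mem _ (hks _ _ e2) (hks _ _ e3)
        have hX1 : ∀ m : M, (X 1 : MvPolynomial (Fin 2) k) • m ∈
            Submodule.span (MvPolynomial (Fin 2) k) {v 2} := by
          intro m
          rw [dec4 v m]
          simp only [smul_add, smul_commk, h5, h6, h7, h8, smul_zero, add_zero]
          have e2 : v 2 ∈ Submodule.span (MvPolynomial (Fin 2) k) {v 2} :=
            Submodule.mem_span_singleton_self _
          have e3 : v 3 ∈ Submodule.span (MvPolynomial (Fin 2) k) {v 2} := by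
            rw [← h3]; exact Submodule.smul_mem _ _ e2
          have hks : ∀ (c : k) (w : M),
              w ∈ Submodule.span (MvPolynomial (Fin 2) k) {v 2} →
              c • w ∈ Submodule.span (MvPolynomial (Fin 2) k) {v 2} := by
            intro c w hw; rw [smulC]; exact Submodule.smul_mem _ _ hw
          exact Submodule.add_mem _ (Submodule.add_mem _ (hks _ _ (hks _ _ e2))
            (hks _ _ e3)) (hks _ _ (hks _ _ e3))
        rcases hx with hx | hx <;> subst hx
        · exact hX0 m
        · exact hX1 m
    | zero => rw [zero_smul]; exact Submodule.zero_mem _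
    | add x y _ _ hx hy => rw [add_smul]; exact Submodule.add_mem _ hx hy
    | smul c x _ hx => rw [smul_eq_mul, mul_smul]; exact Submodule.smul_mem _ _ hx
  · rw [Submodule.span_le, Set.singleton_subset_iff]
    rw [← h1]
    exact Submodule.smul_mem_smul (Ideal.subset_span (by simp)) trivial

lemma mM_eq_k (v : Module.Basis (Fin 4) k M) (hm : IsMt' k t M v) :
    Submodule.restrictScalars k
      ((mIdeal' k) • (⊤ : Submodule (MvPolynomial (Fin 2) k) M))
      = Submodule.span k {v 2, v 3} := by
  obtain ⟨h1, h2, h3, h4, h5, h6, h7, h8⟩ := hm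
  rw [mM_eq v ⟨h1,h2,h3,h4,h5,h6,h7,h8⟩]
  apply le_antisymm
  · intro x hx
    rw [Submodule.restrictScalars_mem, Submodule.mem_span_singleton] at hx
    obtain ⟨p, rfl⟩ := hx
    exact pv2 v ⟨h1,h2,h3,h4,h5,h6,h7,h8⟩ p
  · rw [Submodule.span_le]
    rintro x (rfl | rfl)
    · exact Submodule.mem_span_singleton_self _
    · show v 3 ∈ Submodule.span (MvPolynomial (Fin 2) k) {v 2}
      rw [← h3]
      exact Submodule.smul_mem _ _ (Submodule.mem_span_singleton_self _)

lemma finrank_M (v : Module.Basis (Fin 4) k M) : Module.finrank k M = 4 := by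
  rw [Module.finrank_eq_card_basis v, Fintype.card_fin]

lemma finrank_span23 (v : Module.Basis (Fin 4) k M) :
    Module.finrank k (Submodule.span k {v 2, v 3} : Submodule k M) = 2 := by
  have hli : LinearIndependent k ![v 2, v 3] := by
    have hinj : Function.Injective (![2, 3] : Fin 2 → Fin 4) := by decide
    have := v.linearIndependent.comp ![2, 3] hinj
    convert this using 1
    funext i
    fin_cases i <;> rfl
  have hspan : Submodule.span k {v 2, v 3} = Submodule.span k (Set.range ![v 2, v 3]) := by
    congr 1
    rw [Matrix.range_cons, Matrix.range_cons, Matrix.range_empty]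
    simp [Set.pair_comm]
  rw [hspan, finrank_span_eq_card hli, Fintype.card_fin]

lemma finrank_quot (v : Module.Basis (Fin 4) k M) (hm : IsMt' k t M v) :
    Module.finrank k (M ⧸ (Submodule.restrictScalars k
      ((mIdeal' k) • (⊤ : Submodule (MvPolynomial (Fin 2) k) M)))) = 2 := by
  rw [mM_eq_k v hm]
  have : FiniteDimensional k M := Module.Finite.of_basis v
  have h := Submodule.finrank_quotient_add_finrank (Submodule.span k {v 2, v 3} : Submodule k M)
  rw [finrank_span23 v, finrank_M v] at h
  omega

/-- Every polynomial is congruent to `C a + C b * X 0` mod `(X0², X1 - t X0)`. -/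
lemma reduce_mod (t : k) (p : MvPolynomial (Fin 2) k) :
    ∃ a b : k, p - (C a + C b * X 0) ∈
      Ideal.span {(X 0 : MvPolynomial (Fin 2) k) ^ 2, X 1 - C t * X 0} := by
  set I := Ideal.span {(X 0 : MvPolynomial (Fin 2) k) ^ 2, X 1 - C t * X 0} with hI
  have hx2 : (X 0 : MvPolynomial (Fin 2) k) ^ 2 ∈ I := Ideal.subset_span (by simp)
  have hyx : (X 1 - C t * X 0 : MvPolynomial (Fin 2) k) ∈ I := Ideal.subset_span (by simp)
  induction p using MvPolynomial.induction_on with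
  | C a => exact ⟨a, 0, by simp⟩
  | add p q hp hq =>
      obtain ⟨a, b, h⟩ := hp
      obtain ⟨a', b', h'⟩ := hq
      refine ⟨a + a', b + b', ?_⟩
      have := I.add_mem h h'
      convert this using 1
      push_cast [map_add]
      ring
  | mul_X p i hp =>
      obtain ⟨a, b, h⟩ := hp
      fin_cases i
      · refine ⟨0, a, ?_⟩
        show p * X 0 - (C 0 + C a * X 0) ∈ I
        have heq : p * X 0 - (C 0 + C a * X 0) =
            (p - (C a + C b * X 0)) * X 0 + C b * X 0 ^ 2 := by
          simp only [map_zero]; ring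
        rw [heq]
        exact I.add_mem (I.mul_mem_right _ h) (I.mul_mem_left _ hx2)
      · refine ⟨0, a * t, ?_⟩
        show p * X 1 - (C 0 + C (a * t) * X 0) ∈ I
        have heq : p * X 1 - (C 0 + C (a * t) * X 0) =
            (p - (C a + C b * X 0)) * X 1 + (C a + C b * X 0) * (X 1 - C t * X 0)
              + (C b * C t) * X 0 ^ 2 := by
          simp only [map_zero, map_mul]; ring
        rw [heq]
        exact I.add_mem (I.add_mem (I.mul_mem_right _ h) (I.mul_mem_left _ hyx))
          (I.mul_mem_left _ hx2)

lemma ker_eq (v : Module.Basis (Fin 4) k M) (hm : IsMt' k t M v) :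
    LinearMap.ker (LinearMap.toSpanSingleton (MvPolynomial (Fin 2) k) M (v 2)) =
      Ideal.span {(X 0 : MvPolynomial (Fin 2) k) ^ 2, X 1 - C t * X 0} := by
  obtain ⟨h1, h2, h3, h4, h5, h6, h7, h8⟩ := hm
  set I := Ideal.span {(X 0 : MvPolynomial (Fin 2) k) ^ 2, X 1 - C t * X 0} with hI
  have hIker : ∀ q ∈ I, q • v 2 = 0 := by
    intro q hq
    induction hq using Submodule.span_induction with
    | mem x hx =>
        rcases hx with hx | hx <;> subst hx
        · rw [pow_two, mul_smul, h3, h4]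
        · rw [sub_smul, mul_smul, h3, h7, ← smulC, sub_self]
    | zero => rw [zero_smul]
    | add x y _ _ hx hy => rw [add_smul, hx, hy, add_zero]
    | smul c x _ hx => rw [smul_eq_mul, mul_smul, hx, smul_zero]
  apply le_antisymm
  · intro p hp
    rw [LinearMap.mem_ker, LinearMap.toSpanSingleton_apply] at hp
    obtain ⟨a, b, hq⟩ := reduce_mod t p
    have h0 : (C a + C b * X 0 : MvPolynomial (Fin 2) k) • v 2 = 0 := by
      have : (C a + C b * X 0 : MvPolynomial (Fin 2) k) • v 2
          = p • v 2 - (p - (C a + C b * X 0)) • v 2 := by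
        rw [sub_smul]; abel
      rw [this, hp, hIker _ hq, sub_zero]
    have hab : a • v 2 + b • v 3 = 0 := by
      rw [add_smul, mul_smul, h3, ← smulC, ← smulC] at h0
      exact h0
    have hab2 : a = 0 ∧ b = 0 := by
      have hrep : v.repr (a • v 2 + b • v 3) = 0 := by rw [hab, map_zero]
      rw [map_add, map_smul, map_smul, v.repr_self, v.repr_self] at hrep
      have ha := DFunLike.congr_fun hrep 2
      have hb := DFunLike.congr_fun hrep 3
      simp [Finsupp.single_apply] at ha hb
      exact ⟨ha, hb⟩
    simpa [hab2.1, hab2.2] using hq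
  · intro q hq
    rw [LinearMap.mem_ker, LinearMap.toSpanSingleton_apply]
    exact hIker q hq

lemma iso_part (v : Module.Basis (Fin 4) k M) (hm : IsMt' k t M v) :
    Nonempty ((↥((mIdeal' k) • (⊤ : Submodule (MvPolynomial (Fin 2) k) M)))
      ≃ₗ[MvPolynomial (Fin 2) k]
      (MvPolynomial (Fin 2) k ⧸
        (Ideal.span {(X 0 : MvPolynomial (Fin 2) k) ^ 2, X 1 - C t * X 0}))) := by
  set φ := LinearMap.toSpanSingleton (MvPolynomial (Fin 2) k) M (v 2) with hφ
  have hrange : (mIdeal' k) • (⊤ : Submodule (MvPolynomial (Fin 2) k) M)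
      = LinearMap.range φ := by
    rw [mM_eq v hm, hφ, ← LinearMap.span_singleton_eq_range]
  refine ⟨(LinearEquiv.ofEq _ _ hrange).trans
    (φ.quotKerEquivRange.symm.trans (Submodule.quotEquivOfEq _ _ (ker_eq v hm)))⟩

end Aux

section Exist

variable {k : Type} [Field k]

/-- x-action -/
def Xe (k : Type) [Field k] : (Fin 4 → k) →ₗ[k] (Fin 4 → k) where
  toFun w := ![0, 0, w 0, w 2]
  map_add' a b := by funext j; fin_cases j <;> simp
  map_smul' c a := by funext j; fin_cases j <;> simp

/-- y-action -/
def Ye (k : Type) [Field k] (t : k) : (Fin 4 → k) →ₗ[k] (Fin 4 → k) where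
  toFun w := ![0, 0, t * w 0, w 1 + t * w 2]
  map_add' a b := by funext j; fin_cases j <;> (simp; try ring)
  map_smul' c a := by funext j; fin_cases j <;> (simp; try ring)

lemma commXY (t : k) : Xe k * Ye k t = Ye k t * Xe k := by
  ext w j
  fin_cases j <;> simp [Xe, Ye, Module.End.mul_apply]

noncomputable def St (t : k) : Subalgebra k (Module.End k (Fin 4 → k)) :=
  Algebra.adjoin k {Xe k, Ye k t}

lemma commS (t : k) : ∀ a ∈ ({Xe k, Ye k t} : Set (Module.End k (Fin 4 → k))),
    ∀ b ∈ ({Xe k, Ye k t} : Set (Module.End k (Fin 4 → k))), a * b = b * a := by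
  rintro a (rfl | rfl) b (rfl | rfl) <;> first | rfl | exact commXY t | exact (commXY t).symm

noncomputable instance StComm (t : k) : CommRing (St t) :=
  { (St t).toRing with mul_comm := (Algebra.adjoinCommRingOfComm k (commS t)).mul_comm }

noncomputable def ψ (t : k) : MvPolynomial (Fin 2) k →ₐ[k] Module.End k (Fin 4 → k) :=
  (St t).val.comp (MvPolynomial.aeval
    ![⟨Xe k, Algebra.subset_adjoin (by simp)⟩, ⟨Ye k t, Algebra.subset_adjoin (by simp)⟩])

noncomputable def modA (t : k) : Module (MvPolynomial (Fin 2) k) (Fin 4 → k) :=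
  Module.compHom _ (ψ t).toRingHom

lemma exists_Mt (t : k) :
    ∃ (M : Type) (_ : AddCommGroup M) (_ : Module (MvPolynomial (Fin 2) k) M)
        (_ : Module k M) (_ : IsScalarTower k (MvPolynomial (Fin 2) k) M)
        (v : Module.Basis (Fin 4) k M),
      ((X 0 : MvPolynomial (Fin 2) k) • v 0 = v 2 ∧
       (X 0 : MvPolynomial (Fin 2) k) • v 1 = 0 ∧
       (X 0 : MvPolynomial (Fin 2) k) • v 2 = v 3 ∧
       (X 0 : MvPolynomial (Fin 2) k) • v 3 = 0 ∧
       (X 1 : MvPolynomial (Fin 2) k) • v 0 = t • v 2 ∧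
       (X 1 : MvPolynomial (Fin 2) k) • v 1 = v 3 ∧
       (X 1 : MvPolynomial (Fin 2) k) • v 2 = t • v 3 ∧
       (X 1 : MvPolynomial (Fin 2) k) • v 3 = 0) := by
  refine ⟨Fin 4 → k, inferInstance, modA t, inferInstance, ?_, Pi.basisFun k (Fin 4), ?_⟩
  · letI := modA t
    refine ⟨fun c p w => ?_⟩
    show (ψ t) (c • p) w = c • ((ψ t) p w)
    rw [map_smul]
    rfl
  · letI := modA t
    have hsmul : ∀ (p : MvPolynomial (Fin 2) k) (w : Fin 4 → k), p • w = (ψ t) p w :=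
      fun p w => rfl
    have hX0 : (ψ t) (X 0) = Xe k := by
      simp [ψ, MvPolynomial.aeval_X]
    have hX1 : (ψ t) (X 1) = Ye k t := by
      simp [ψ, MvPolynomial.aeval_X]
    have hv : ∀ i, Pi.basisFun k (Fin 4) i = Pi.single i 1 := fun i => by
      simp [Pi.basisFun_apply]
    refine ⟨?_, ?_, ?_, ?_, ?_, ?_, ?_, ?_⟩ <;>
      rw [hsmul] <;>
      first
        | rw [hX0] | rw [hX1]
    all_goals
      funext j
      fin_cases j <;>
        simp [Xe, Ye, hv, Pi.single_apply]

end Exist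

/-- For each `t ∈ k`, the module `M_t` with the above multiplication table is
a well-defined (i.e. exists) indecomposable `A = k[x,y]`-module of length `4` with
`dim_k M_t/(m·M_t) = 2` and `m·M_t ≅ A/(x², y − tx)`. -/
theorem Mt_wellDefined_indecomposable (k : Type) [Field k] [IsAlgClosed k] [CharZero k]
    (t : k) :
    -- well-definedness: such a module exists
    (∃ (M : Type) (_ : AddCommGroup M) (_ : Module (MvPolynomial (Fin 2) k) M)
        (_ : Module k M) (_ : IsScalarTower k (MvPolynomial (Fin 2) k) M)
        (v : Module.Basis (Fin 4) k M), IsMt k t M v) ∧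
    -- and any module with this multiplication table has the stated properties
    ∀ (M : Type) [AddCommGroup M] [Module (MvPolynomial (Fin 2) k) M] [Module k M]
      [IsScalarTower k (MvPolynomial (Fin 2) k) M] (v : Module.Basis (Fin 4) k M),
      IsMt k t M v →
        -- `M_t` is indecomposable
        (∀ N₁ N₂ : Submodule (MvPolynomial (Fin 2) k) M, IsCompl N₁ N₂ → N₁ = ⊥ ∨ N₂ = ⊥) ∧
        -- `M_t` has length `4`
        Module.finrank k M = 4 ∧
        -- `dim_k M_t/(m·M_t) = 2`
        Module.finrank k (M ⧸ (Submodule.restrictScalars k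
          ((mIdeal k) • (⊤ : Submodule (MvPolynomial (Fin 2) k) M)))) = 2 ∧
        -- `m·M_t ≅ A/(x², y − tx)` as `A`-modules
        Nonempty ((↥((mIdeal k) • (⊤ : Submodule (MvPolynomial (Fin 2) k) M)))
          ≃ₗ[MvPolynomial (Fin 2) k]
          (MvPolynomial (Fin 2) k ⧸
            (Ideal.span {(X 0 : MvPolynomial (Fin 2) k) ^ 2, X 1 - C t * X 0}))) := by
  constructor
  · obtain ⟨M, i1, i2, i3, i4, v, h⟩ := exists_Mt t
    exact ⟨M, i1, i2, i3, i4, v, h⟩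
  · intro M _ _ _ _ v hm
    have hm' : IsMt' k t M v := hm
    refine ⟨?_, finrank_M v, finrank_quot v hm', iso_part v hm'⟩
    intro N₁ N₂ hc
    by_contra hcon
    push_neg at hcon
    obtain ⟨hn1, hn2⟩ := hcon
    obtain ⟨z₁, hz₁, hz₁0⟩ := Submodule.ne_bot_iff N₁ |>.mp hn1
    obtain ⟨z₂, hz₂, hz₂0⟩ := Submodule.ne_bot_iff N₂ |>.mp hn2
    have h1 := v3_mem v hm' N₁ z₁ hz₁ hz₁0
    have h2 := v3_mem v hm' N₂ z₂ hz₂ hz₂0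
    have : v 3 ∈ N₁ ⊓ N₂ := ⟨h1, h2⟩
    rw [hc.inf_eq_bot] at this
    exact v.ne_zero 3 this
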